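/- With D the (k+2)×(k+2) matrix of the previous statement, let ζ = e^{πi/ℓ} η^r (an ℓ-th root of -1) and let v be the column vector (y^{(k+1)(q-1)/ℓ - j}, ζ^{-1}, ζ^{-2}, ..., ζ^{-k}, ζ^{-(k+1)} x^{p-1-i})^T. Then every entry of the vector Dᵀ v is divisible in ℂ[x,y] by w_r = x^{(p-1)/ℓ} - ζ y^{(q-1)/ℓ}. -/

import Mathlib

open MvPolynomial

lemma sum_two_aux {M : Type*} [AddCommMonoid M] {n : ℕ} (f : Fin n → M) (i j : Fin n)
    (hij : i ≠ j) (h : ∀ t, t ≠ i → t ≠ j → f t = 0) :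
    ∑ t, f t = f i + f j := by
  rw [← Finset.sum_pair hij]
  exact (Finset.sum_subset (Finset.subset_univ {i, j}) (by
    intro t _ ht
    simp only [Finset.mem_insert, Finset.mem_singleton, not_or] at ht
    exact h t ht.1 ht.2)).symm

lemma nat_lt_div_succ_mul (x y : ℕ) (hy : 0 < y) : x < (x / y + 1) * y := by
  calc x = y * (x / y) + x % y := (Nat.div_add_mod x y).symm
    _ < y * (x / y) + y := by have := Nat.mod_lt x hy; omega
    _ = (x / y + 1) * y := by ring

set_option maxHeartbeats 2000000 in
/-- With `D` the even differential of `K_{0,i,j}`, `ζ = e^{πi/ℓ} η^r` an `ℓ`-th root of `-1`,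
and `v = (y^{(k+1)(q-1)/ℓ - j}, ζ⁻¹, ζ⁻², …, ζ⁻ᵏ, ζ^{-(k+1)} x^{p-1-i})ᵀ`, every entry of
`Dᵀ v` is divisible by `w_r = x^{(p-1)/ℓ} - ζ y^{(q-1)/ℓ}` in `ℂ[x,y]`. -/
theorem loop_morphism_to_Kwr (p q ℓ i j k r : ℕ) (hp : 2 ≤ p) (hq : 2 ≤ q)
    (hℓ : 1 ≤ ℓ) (hr1 : 1 ≤ r) (hr2 : r ≤ ℓ) (hℓp : ℓ ∣ p - 1) (hℓq : ℓ ∣ q - 1)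
    (hi1 : p - (p - 1) / ℓ ≤ i) (hi2 : i ≤ p - 1) (hj1 : 1 ≤ j) (hj2 : j ≤ q - 1)
    (hk : k = (j - 1) * ℓ / (q - 1))
    (ζ : ℂ)
    (hζ : ζ = Complex.exp ((Real.pi : ℂ) * Complex.I / (ℓ : ℂ)) *
      Complex.exp (2 * (Real.pi : ℂ) * Complex.I / (ℓ : ℂ)) ^ r)
    (D : Matrix (Fin (k + 2)) (Fin (k + 2)) (MvPolynomial (Fin 2) ℂ))
    (hD : D = Matrix.of fun s t : Fin (k + 2) =>
      if (s : ℕ) = 0 ∧ (t : ℕ) = 0 then (X 1 : MvPolynomial (Fin 2) ℂ) ^ (j - k * ((q - 1) / ℓ))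
      else if (s : ℕ) = 0 ∧ (t : ℕ) = k + 1 then
        X 0 ^ (p - i + (ℓ - 1 - k) * ((p - 1) / ℓ)) * X 1
      else if (s : ℕ) = (t : ℕ) ∧ 1 ≤ (s : ℕ) ∧ (s : ℕ) ≤ k then X 1 ^ ((q - 1) / ℓ)
      else if (s : ℕ) = (t : ℕ) + 1 ∧ (s : ℕ) ≤ k then -(X 0 ^ ((p - 1) / ℓ))
      else if (s : ℕ) = k + 1 ∧ (t : ℕ) = k then -(X 0 ^ (i - (ℓ - 1) * ((p - 1) / ℓ)))
      else if (s : ℕ) = k + 1 ∧ (t : ℕ) = k + 1 then X 0 * X 1 ^ (q - j)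
      else 0)
    (v : Fin (k + 2) → MvPolynomial (Fin 2) ℂ)
    (hv : v = fun s : Fin (k + 2) =>
      if (s : ℕ) = 0 then (X 1 : MvPolynomial (Fin 2) ℂ) ^ ((k + 1) * ((q - 1) / ℓ) - j)
      else if (s : ℕ) = k + 1 then C (ζ⁻¹ ^ (k + 1)) * X 0 ^ (p - 1 - i)
      else C (ζ⁻¹ ^ (s : ℕ))) :
    ∀ s : Fin (k + 2),
      ((X 0 : MvPolynomial (Fin 2) ℂ) ^ ((p - 1) / ℓ) - C ζ * X 1 ^ ((q - 1) / ℓ)) ∣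
        D.transpose.mulVec v s := by
  have hℓ0 : 0 < ℓ := hℓ
  set a := (p - 1) / ℓ with ha
  set b := (q - 1) / ℓ with hb
  set mm := ℓ - 1 - k with hmm
  have hpa : ℓ * a = p - 1 := Nat.mul_div_cancel' hℓp
  have hqb : ℓ * b = q - 1 := Nat.mul_div_cancel' hℓq
  have ha1 : 1 ≤ a := by
    rcases Nat.eq_zero_or_pos a with h | h
    · rw [h, mul_zero] at hpa; omega
    · exact h
  have hb1 : 1 ≤ b := by
    rcases Nat.eq_zero_or_pos b with h | h
    · rw [h, mul_zero] at hqb; omega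
    · exact h
  -- bounds on k*b
  have hkb1 : k * b + 1 ≤ j := by
    have h1 : k * (ℓ * b) ≤ (j - 1) * ℓ := by
      rw [hk, hqb]; exact Nat.div_mul_le_self _ _
    have h2 : k * b * ℓ ≤ (j - 1) * ℓ := by
      calc k * b * ℓ = k * (ℓ * b) := by ring
        _ ≤ (j - 1) * ℓ := h1
    have h3 : k * b ≤ j - 1 := Nat.le_of_mul_le_mul_right h2 hℓ0
    omega
  have hkb2 : j ≤ k * b + b := by
    have h1 : (j - 1) * ℓ < (k + 1) * (ℓ * b) := by
      rw [hk, hqb]; exact nat_lt_div_succ_mul _ _ (by omega)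
    have h2 : (j - 1) * ℓ < (k * b + b) * ℓ := by
      calc (j - 1) * ℓ < (k + 1) * (ℓ * b) := h1
        _ = (k * b + b) * ℓ := by ring
    have h3 : j - 1 < k * b + b := lt_of_mul_lt_mul_right h2 (Nat.zero_le _)
    omega
  have hkl : k + 1 ≤ ℓ := by
    have h1 : k * b < ℓ * b := by omega
    have h2 : k < ℓ := lt_of_mul_lt_mul_right h1 (Nat.zero_le _)
    omega
  have hsm : (ℓ - 1) * a + a = ℓ * a := by
    have h9 : ℓ - 1 + 1 = ℓ := by omega
    calc (ℓ - 1) * a + a = (ℓ - 1 + 1) * a := by ring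
      _ = ℓ * a := by rw [h9]
  have hia1 : (ℓ - 1) * a + 1 ≤ i := by omega
  have hia2 : i ≤ (ℓ - 1) * a + a := by omega
  -- facts about ζ
  have hℓC : (ℓ : ℂ) ≠ 0 := Nat.cast_ne_zero.mpr (by omega)
  have hζ0 : ζ ≠ 0 := by
    rw [hζ]
    exact mul_ne_zero (Complex.exp_ne_zero _) (pow_ne_zero _ (Complex.exp_ne_zero _))
  have hζℓ : ζ ^ ℓ = -1 := by
    rw [hζ, mul_pow, ← pow_mul, mul_comm r ℓ, pow_mul, ← Complex.exp_nat_mul,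
      ← Complex.exp_nat_mul]
    have e1 : (ℓ : ℂ) * ((Real.pi : ℂ) * Complex.I / (ℓ : ℂ)) = Real.pi * Complex.I := by
      field_simp
    have e2 : (ℓ : ℂ) * (2 * (Real.pi : ℂ) * Complex.I / (ℓ : ℂ))
        = 2 * Real.pi * Complex.I := by field_simp
    rw [e1, e2, Complex.exp_pi_mul_I, Complex.exp_two_pi_mul_I, one_pow, mul_one]
  have hinv : ζ * ζ⁻¹ = 1 := mul_inv_cancel₀ hζ0
  set w : MvPolynomial (Fin 2) ℂ := X 0 ^ a - C ζ * X 1 ^ b with hw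
  have key : ∀ c : ℕ, w ∣ (C (ζ⁻¹ ^ c) * X 1 ^ b - C (ζ⁻¹ ^ (c + 1)) * X 0 ^ a) := by
    intro c
    refine ⟨-(C (ζ⁻¹ ^ (c + 1))), ?_⟩
    have hcc : (ζ⁻¹ : ℂ) ^ c = ζ * ζ⁻¹ ^ (c + 1) := by
      calc ζ⁻¹ ^ c = (ζ * ζ⁻¹) * ζ⁻¹ ^ c := by rw [hinv, one_mul]
        _ = ζ * ζ⁻¹ ^ (c + 1) := by ring
    rw [hw, hcc, C_mul]
    ring
  have hml : mm + (k + 1) = ℓ := by omega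
  have hmζ : (ζ⁻¹ : ℂ) ^ (k + 1) = -(ζ ^ mm) := by
    have h1 : ζ ^ mm * ζ ^ (k + 1) = -1 := by rw [← pow_add, hml, hζℓ]
    have hne : ζ ^ (k + 1) ≠ 0 := pow_ne_zero _ hζ0
    have h2 : ζ ^ mm = -(ζ ^ (k + 1))⁻¹ := by
      field_simp
      linear_combination h1
    rw [inv_pow, h2, neg_neg]
  have hlast : w ∣ (X 0 ^ (mm * a) + C (ζ⁻¹ ^ (k + 1)) * X 1 ^ (mm * b)
      : MvPolynomial (Fin 2) ℂ) := by
    have he : (X 0 ^ (mm * a) + C (ζ⁻¹ ^ (k + 1)) * X 1 ^ (mm * b)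
        : MvPolynomial (Fin 2) ℂ) = (X 0 ^ a) ^ mm - (C ζ * X 1 ^ b) ^ mm := by
      rw [hmζ, map_neg, mul_pow, ← C_pow, ← pow_mul, ← pow_mul,
        Nat.mul_comm a mm, Nat.mul_comm b mm]
      ring
    rw [he]
    exact sub_dvd_pow_sub_pow _ _ mm
  intro s
  have hmul : D.transpose.mulVec v s = ∑ t : Fin (k + 2), D t s * v t := by
    simp [Matrix.mulVec, dotProduct, Matrix.transpose_apply]
  rw [hmul]
  have hslt : (s : ℕ) < k + 2 := s.isLt
  rcases Nat.lt_or_ge (s : ℕ) (k + 1) with hs | hs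
  · -- columns 0 … k
    have hs2 : (s : ℕ) + 1 < k + 2 := by omega
    have hne : s ≠ (⟨(s : ℕ) + 1, hs2⟩ : Fin (k + 2)) := by
      simp [Fin.ext_iff]
    have hzero : ∀ t, t ≠ s → t ≠ (⟨(s : ℕ) + 1, hs2⟩ : Fin (k + 2)) →
        D t s * v t = 0 := by
      intro t ht1 ht2
      have h1 : (t : ℕ) ≠ (s : ℕ) := by simpa [Fin.ext_iff] using ht1
      have h2 : (t : ℕ) ≠ (s : ℕ) + 1 := by simpa [Fin.ext_iff] using ht2
      rw [hD]
      simp only [Matrix.of_apply]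
      split_ifs <;> first | (exfalso; omega) | simp
    have hsum : ∑ t : Fin (k + 2), D t s * v t
        = D s s * v s + D ⟨(s : ℕ) + 1, hs2⟩ s * v ⟨(s : ℕ) + 1, hs2⟩ :=
      sum_two_aux (fun t => D t s * v t) s ⟨(s : ℕ) + 1, hs2⟩ hne hzero
    rw [hsum]
    have hXa : (-X (0 : Fin 2) ^ (i - (ℓ - 1) * a)
          * (C (ζ⁻¹ ^ (k + 1)) * X 0 ^ (p - 1 - i)) : MvPolynomial (Fin 2) ℂ)
        = -(C (ζ⁻¹ ^ (k + 1)) * X 0 ^ a) := by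
      have h8 : (i - (ℓ - 1) * a) + (p - 1 - i) = a := by omega
      calc -X (0 : Fin 2) ^ (i - (ℓ - 1) * a) * (C (ζ⁻¹ ^ (k + 1)) * X 0 ^ (p - 1 - i))
          = -(C (ζ⁻¹ ^ (k + 1))
              * (X (0 : Fin 2) ^ (i - (ℓ - 1) * a) * X 0 ^ (p - 1 - i))) := by ring
        _ = -(C (ζ⁻¹ ^ (k + 1)) * X 0 ^ a) := by rw [← pow_add, h8]
    have hXb : (X (1 : Fin 2) ^ (j - k * b) * X 1 ^ ((k + 1) * b - j)
          : MvPolynomial (Fin 2) ℂ) = X 1 ^ b := by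
      rw [← pow_add]
      congr 1
      have h7 : (k + 1) * b = k * b + b := by ring
      omega
    by_cases hc0 : (s : ℕ) = 0
    · have hDss : D s s = X 1 ^ (j - k * b) := by
        rw [hD]; simp only [Matrix.of_apply, Fin.val_mk, Nat.succ_ne_zero, false_and, if_false, true_and, and_true, eq_self_iff_true]
        split_ifs <;> first | (exfalso; omega) | rfl
      have hvs : v s = X 1 ^ ((k + 1) * b - j) := by
        rw [hv]; simp only []
        split_ifs <;> first | (exfalso; omega) | rfl
      by_cases hck : (s : ℕ) = k
      · -- k = 0
        have hDi2 : D ⟨(s : ℕ) + 1, hs2⟩ s = -X 0 ^ (i - (ℓ - 1) * a) := by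
          rw [hD]; simp only [Matrix.of_apply, Fin.val_mk, Nat.succ_ne_zero, false_and, if_false, true_and, and_true, eq_self_iff_true]
          split_ifs <;> first | (exfalso; omega) | rfl
        have hvi2 : v ⟨(s : ℕ) + 1, hs2⟩ = C (ζ⁻¹ ^ (k + 1)) * X 0 ^ (p - 1 - i) := by
          rw [hv]; simp only [Fin.val_mk, Nat.succ_ne_zero, false_and, if_false, true_and, and_true]
          split_ifs <;> first | (exfalso; omega) | rfl
        rw [hDss, hvs, hDi2, hvi2, hXb, hXa,
          show (X (1 : Fin 2) ^ b + -(C (ζ⁻¹ ^ (k + 1)) * X 0 ^ a)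
              : MvPolynomial (Fin 2) ℂ)
            = C (ζ⁻¹ ^ k) * X 1 ^ b - C (ζ⁻¹ ^ (k + 1)) * X 0 ^ a from by
              rw [show k = 0 from by omega, pow_zero, map_one, one_mul]; ring]
        exact key k
      · have hDi2 : D ⟨(s : ℕ) + 1, hs2⟩ s = -X 0 ^ a := by
          rw [hD]; simp only [Matrix.of_apply, Fin.val_mk, Nat.succ_ne_zero, false_and, if_false, true_and, and_true, eq_self_iff_true]
          split_ifs <;> first | (exfalso; omega) | rfl
        have hvi2 : v ⟨(s : ℕ) + 1, hs2⟩ = C (ζ⁻¹ ^ ((s : ℕ) + 1)) := by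
          rw [hv]; simp only [Fin.val_mk, Nat.succ_ne_zero, false_and, if_false, true_and, and_true]
          split_ifs <;> first | (exfalso; omega) | rfl
        rw [hDss, hvs, hDi2, hvi2, hXb, hc0,
          show (X (1 : Fin 2) ^ b + -X 0 ^ a * C (ζ⁻¹ ^ (0 + 1))
              : MvPolynomial (Fin 2) ℂ)
            = C (ζ⁻¹ ^ 0) * X 1 ^ b - C (ζ⁻¹ ^ (0 + 1)) * X 0 ^ a from by
              rw [pow_zero, map_one, one_mul]; ring]
        exact key 0
    · have hDss : D s s = X 1 ^ b := by
        rw [hD]; simp only [Matrix.of_apply, Fin.val_mk, Nat.succ_ne_zero, false_and, if_false, true_and, and_true, eq_self_iff_true]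
        split_ifs <;> first | (exfalso; omega) | rfl
      have hvs : v s = C (ζ⁻¹ ^ (s : ℕ)) := by
        rw [hv]; simp only []
        split_ifs <;> first | (exfalso; omega) | rfl
      by_cases hck : (s : ℕ) = k
      · have hDi2 : D ⟨(s : ℕ) + 1, hs2⟩ s = -X 0 ^ (i - (ℓ - 1) * a) := by
          rw [hD]; simp only [Matrix.of_apply, Fin.val_mk, Nat.succ_ne_zero, false_and, if_false, true_and, and_true, eq_self_iff_true]
          split_ifs <;> first | (exfalso; omega) | rfl
        have hvi2 : v ⟨(s : ℕ) + 1, hs2⟩ = C (ζ⁻¹ ^ (k + 1)) * X 0 ^ (p - 1 - i) := by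
          rw [hv]; simp only [Fin.val_mk, Nat.succ_ne_zero, false_and, if_false, true_and, and_true]
          split_ifs <;> first | (exfalso; omega) | rfl
        rw [hDss, hvs, hDi2, hvi2, hXa, hck,
          show (X (1 : Fin 2) ^ b * C (ζ⁻¹ ^ k) + -(C (ζ⁻¹ ^ (k + 1)) * X 0 ^ a)
              : MvPolynomial (Fin 2) ℂ)
            = C (ζ⁻¹ ^ k) * X 1 ^ b - C (ζ⁻¹ ^ (k + 1)) * X 0 ^ a from by ring]
        exact key k
      · have hDi2 : D ⟨(s : ℕ) + 1, hs2⟩ s = -X 0 ^ a := by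
          rw [hD]; simp only [Matrix.of_apply, Fin.val_mk, Nat.succ_ne_zero, false_and, if_false, true_and, and_true, eq_self_iff_true]
          split_ifs <;> first | (exfalso; omega) | rfl
        have hvi2 : v ⟨(s : ℕ) + 1, hs2⟩ = C (ζ⁻¹ ^ ((s : ℕ) + 1)) := by
          rw [hv]; simp only [Fin.val_mk, Nat.succ_ne_zero, false_and, if_false, true_and, and_true]
          split_ifs <;> first | (exfalso; omega) | rfl
        rw [hDss, hvs, hDi2, hvi2,
          show (X (1 : Fin 2) ^ b * C (ζ⁻¹ ^ (s : ℕ))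
                + -X 0 ^ a * C (ζ⁻¹ ^ ((s : ℕ) + 1)) : MvPolynomial (Fin 2) ℂ)
            = C (ζ⁻¹ ^ (s : ℕ)) * X 1 ^ b - C (ζ⁻¹ ^ ((s : ℕ) + 1)) * X 0 ^ a from by
              ring]
        exact key _
  · -- last column
    have hs' : (s : ℕ) = k + 1 := by omega
    have h02 : (0 : ℕ) < k + 2 := by omega
    have hne : (⟨0, h02⟩ : Fin (k + 2)) ≠ s := by
      simp only [ne_eq, Fin.ext_iff, Fin.val_mk]
      omega
    have hzero : ∀ t, t ≠ (⟨0, h02⟩ : Fin (k + 2)) → t ≠ s → D t s * v t = 0 := by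
      intro t ht1 ht2
      have h1 : (t : ℕ) ≠ 0 := fun h => ht1 (Fin.ext h)
      have h2 : (t : ℕ) ≠ (s : ℕ) := by simpa [Fin.ext_iff] using ht2
      rw [hD]
      simp only [Matrix.of_apply]
      split_ifs <;> first | (exfalso; omega) | simp
    have hsum : ∑ t : Fin (k + 2), D t s * v t
        = D ⟨0, h02⟩ s * v ⟨0, h02⟩ + D s s * v s :=
      sum_two_aux (fun t => D t s * v t) ⟨0, h02⟩ s hne hzero
    rw [hsum]
    have ht1 : D ⟨0, h02⟩ s = X 0 ^ (p - i + mm * a) * X 1 := by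
      rw [hD]; simp only [Matrix.of_apply, Fin.val_mk, Nat.succ_ne_zero, false_and, if_false, true_and, and_true, eq_self_iff_true]
      split_ifs <;> first | (exfalso; omega) | rfl
    have ht1' : v ⟨0, h02⟩ = X 1 ^ ((k + 1) * b - j) := by
      rw [hv]; simp only [Fin.val_mk]
      split_ifs <;> first | (exfalso; omega) | rfl
    have ht2 : D s s = X 0 * X 1 ^ (q - j) := by
      rw [hD]; simp only [Matrix.of_apply, Fin.val_mk, Nat.succ_ne_zero, false_and, if_false, true_and, and_true, eq_self_iff_true]
      split_ifs <;> first | (exfalso; omega) | rfl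
    have ht2' : v s = C (ζ⁻¹ ^ (k + 1)) * X 0 ^ (p - 1 - i) := by
      rw [hv]; simp only []
      split_ifs <;> first | (exfalso; omega) | rfl
    rw [ht1, ht1', ht2, ht2']
    have h6 : (k + 1) * b + mm * b = ℓ * b := by
      have h7 : (k + 1) + mm = ℓ := by omega
      calc (k + 1) * b + mm * b = ((k + 1) + mm) * b := by ring
        _ = ℓ * b := by rw [h7]
    have h7 : (k + 1) * b = k * b + b := by ring
    have e2 : q - j = (((k + 1) * b - j) + 1) + mm * b := by omega
    have e3 : p - i = 1 + (p - 1 - i) := by omega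
    have heq : (X 0 : MvPolynomial (Fin 2) ℂ) ^ (p - i + mm * a) * X 1
            * X 1 ^ ((k + 1) * b - j)
          + X 0 * X 1 ^ (q - j) * (C (ζ⁻¹ ^ (k + 1)) * X 0 ^ (p - 1 - i))
        = X 0 ^ (p - i) * X 1 ^ (((k + 1) * b - j) + 1)
          * (X 0 ^ (mm * a) + C (ζ⁻¹ ^ (k + 1)) * X 1 ^ (mm * b)) := by
      rw [e2, e3]
      simp only [pow_add, pow_one]
      ring
    have goal2 : w ∣ X 0 ^ (p - i) * X 1 ^ (((k + 1) * b - j) + 1)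
        * (X 0 ^ (mm * a) + C (ζ⁻¹ ^ (k + 1)) * X 1 ^ (mm * b)) :=
      Dvd.dvd.mul_left hlast _
    rw [heq]
    exact goal2
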